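/- Let α ∈ (0,1] and β ∈ [1,∞) satisfy hypothesis (H3), and let S ⊂ ℝ² be a finite set whose points have pairwise distances ≥ α (equivalently, a configuration with finite energy for a potential satisfying (H1)–(H3)). If S is connected, i.e. any two points of S are joined by a chain of points of S with consecutive distances ≤ β, then the set Ω = ⋃_{x ∈ S} V_trunc(x) is a connected subset of ℝ². -/

import Mathlib

open Set Metric

noncomputable section

abbrev E2 := EuclideanSpace ℝ (Fin 2)

/-- Hypothesis (H3). -/
def H3cond (α β : ℝ) : Prop :=
  ∀ (c : E2) (T : Finset E2),
    (∀ x ∈ T, dist x c ≤ β) → (∀ x ∈ T, α ≤ dist x c) →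
    (∀ x ∈ T, ∀ y ∈ T, x ≠ y → α ≤ dist x y) → T.card ≤ 6

/-- The Voronoi cell of `x` with respect to the set `S`. -/
def vor (S : Set E2) (x : E2) : Set E2 :=
  {y | ∀ z ∈ S, z ≠ x → dist y x ≤ dist y z}

/-- The truncated Voronoi cell `V_trunc(x) = V(x) ∩ B̄₁(x)`. -/
def vtrunc (S : Set E2) (x : E2) : Set E2 :=
  vor S x ∩ closedBall x 1

/-- `S` is connected (with interaction range `β`): any two of its points are joined by a
chain of points of `S` with consecutive distances `≤ β`. -/
def ChainConnected (β : ℝ) (S : Finset E2) : Prop :=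
  ∀ x ∈ S, ∀ y ∈ S, ∃ (n : ℕ) (c : ℕ → E2),
    c 0 = x ∧ c n = y ∧ (∀ i ≤ n, c i ∈ S) ∧ ∀ i < n, dist (c (i + 1)) (c i) ≤ β

/-! ### Auxiliary lemmas -/

/-- A point of the plane with given coordinates. -/
def pt (a b : ℝ) : E2 := (WithLp.equiv 2 (Fin 2 → ℝ)).symm ![a, b]

lemma dist_pt (a b c d : ℝ) :
    dist (pt a b) (pt c d) = Real.sqrt ((a - c) ^ 2 + (b - d) ^ 2) := by
  rw [EuclideanSpace.dist_eq]
  congr 1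
  simp [pt, Fin.sum_univ_two, Real.dist_eq, sq_abs]

lemma one_le_dist_pt {a b c d : ℝ} (h : 1 ≤ (a - c) ^ 2 + (b - d) ^ 2) :
    1 ≤ dist (pt a b) (pt c d) := by
  rw [dist_pt]; exact Real.one_le_sqrt.mpr h

lemma dist_pt_le_two {a b c d : ℝ} (h : (a - c) ^ 2 + (b - d) ^ 2 ≤ 4) :
    dist (pt a b) (pt c d) ≤ 2 := by
  rw [dist_pt]
  calc Real.sqrt ((a - c) ^ 2 + (b - d) ^ 2) ≤ Real.sqrt 4 := Real.sqrt_le_sqrt h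
    _ = 2 := by
      rw [show (4 : ℝ) = 2 ^ 2 by norm_num, Real.sqrt_sq (by norm_num : (0:ℝ) ≤ 2)]

lemma ne_of_one_le_dist {x y : E2} (h : 1 ≤ dist x y) : x ≠ y := by
  rintro rfl; simp at h; linarith

-- (H3) forces `β ≤ 2`: otherwise 7 points fit.
set_option maxHeartbeats 1000000 in
-- (H3) forces `β ≤ 2`: otherwise 7 points fit.
lemma beta_le_two {α β : ℝ} (hα1 : 0 < α) (hα2 : α ≤ 1) (h3 : H3cond α β) : β ≤ 2 := by
  by_contra hcon
  push_neg at hcon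
  classical
  set s : ℝ := Real.sqrt 3 with hsdef
  have hs : s ^ 2 = 3 := Real.sq_sqrt (by norm_num)
  set P1 : E2 := pt 2 0
  set P2 : E2 := pt 1 s
  set P3 : E2 := pt (-1) s
  set P4 : E2 := pt (-2) 0
  set P5 : E2 := pt (-1) (-s)
  set P6 : E2 := pt 1 (-s)
  set P7 : E2 := pt 1 0
  set T : Finset E2 := {P1, P2, P3, P4, P5, P6, P7} with hT
  have n12 : P1 ≠ P2 := ne_of_one_le_dist (one_le_dist_pt (by nlinarith))
  have n13 : P1 ≠ P3 := ne_of_one_le_dist (one_le_dist_pt (by nlinarith))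
  have n14 : P1 ≠ P4 := ne_of_one_le_dist (one_le_dist_pt (by nlinarith))
  have n15 : P1 ≠ P5 := ne_of_one_le_dist (one_le_dist_pt (by nlinarith))
  have n16 : P1 ≠ P6 := ne_of_one_le_dist (one_le_dist_pt (by nlinarith))
  have n17 : P1 ≠ P7 := ne_of_one_le_dist (one_le_dist_pt (by nlinarith))
  have n23 : P2 ≠ P3 := ne_of_one_le_dist (one_le_dist_pt (by nlinarith))
  have n24 : P2 ≠ P4 := ne_of_one_le_dist (one_le_dist_pt (by nlinarith))
  have n25 : P2 ≠ P5 := ne_of_one_le_dist (one_le_dist_pt (by nlinarith))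
  have n26 : P2 ≠ P6 := ne_of_one_le_dist (one_le_dist_pt (by nlinarith))
  have n27 : P2 ≠ P7 := ne_of_one_le_dist (one_le_dist_pt (by nlinarith))
  have n34 : P3 ≠ P4 := ne_of_one_le_dist (one_le_dist_pt (by nlinarith))
  have n35 : P3 ≠ P5 := ne_of_one_le_dist (one_le_dist_pt (by nlinarith))
  have n36 : P3 ≠ P6 := ne_of_one_le_dist (one_le_dist_pt (by nlinarith))
  have n37 : P3 ≠ P7 := ne_of_one_le_dist (one_le_dist_pt (by nlinarith))
  have n45 : P4 ≠ P5 := ne_of_one_le_dist (one_le_dist_pt (by nlinarith))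
  have n46 : P4 ≠ P6 := ne_of_one_le_dist (one_le_dist_pt (by nlinarith))
  have n47 : P4 ≠ P7 := ne_of_one_le_dist (one_le_dist_pt (by nlinarith))
  have n56 : P5 ≠ P6 := ne_of_one_le_dist (one_le_dist_pt (by nlinarith))
  have n57 : P5 ≠ P7 := ne_of_one_le_dist (one_le_dist_pt (by nlinarith))
  have n67 : P6 ≠ P7 := ne_of_one_le_dist (one_le_dist_pt (by nlinarith))
  have key : T.card ≤ 6 := by
    apply h3 (pt 0 0) T
    · intro x hx
      simp only [hT, Finset.mem_insert, Finset.mem_singleton] at hx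
      rcases hx with rfl | rfl | rfl | rfl | rfl | rfl | rfl <;>
        exact (dist_pt_le_two (by nlinarith)).trans hcon.le
    · intro x hx
      simp only [hT, Finset.mem_insert, Finset.mem_singleton] at hx
      rcases hx with rfl | rfl | rfl | rfl | rfl | rfl | rfl <;>
        exact hα2.trans (one_le_dist_pt (by nlinarith))
    · intro x hx y hy hxy
      simp only [hT, Finset.mem_insert, Finset.mem_singleton] at hx hy
      rcases hx with rfl | rfl | rfl | rfl | rfl | rfl | rfl <;>
        rcases hy with rfl | rfl | rfl | rfl | rfl | rfl | rfl
      · exact absurd rfl hxy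
      · exact hα2.trans (one_le_dist_pt (by nlinarith))
      · exact hα2.trans (one_le_dist_pt (by nlinarith))
      · exact hα2.trans (one_le_dist_pt (by nlinarith))
      · exact hα2.trans (one_le_dist_pt (by nlinarith))
      · exact hα2.trans (one_le_dist_pt (by nlinarith))
      · exact hα2.trans (one_le_dist_pt (by nlinarith))
      · exact hα2.trans (one_le_dist_pt (by nlinarith))
      · exact absurd rfl hxy
      · exact hα2.trans (one_le_dist_pt (by nlinarith))
      · exact hα2.trans (one_le_dist_pt (by nlinarith))
      · exact hα2.trans (one_le_dist_pt (by nlinarith))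
      · exact hα2.trans (one_le_dist_pt (by nlinarith))
      · exact hα2.trans (one_le_dist_pt (by nlinarith))
      · exact hα2.trans (one_le_dist_pt (by nlinarith))
      · exact hα2.trans (one_le_dist_pt (by nlinarith))
      · exact absurd rfl hxy
      · exact hα2.trans (one_le_dist_pt (by nlinarith))
      · exact hα2.trans (one_le_dist_pt (by nlinarith))
      · exact hα2.trans (one_le_dist_pt (by nlinarith))
      · exact hα2.trans (one_le_dist_pt (by nlinarith))
      · exact hα2.trans (one_le_dist_pt (by nlinarith))
      · exact hα2.trans (one_le_dist_pt (by nlinarith))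
      · exact hα2.trans (one_le_dist_pt (by nlinarith))
      · exact absurd rfl hxy
      · exact hα2.trans (one_le_dist_pt (by nlinarith))
      · exact hα2.trans (one_le_dist_pt (by nlinarith))
      · exact hα2.trans (one_le_dist_pt (by nlinarith))
      · exact hα2.trans (one_le_dist_pt (by nlinarith))
      · exact hα2.trans (one_le_dist_pt (by nlinarith))
      · exact hα2.trans (one_le_dist_pt (by nlinarith))
      · exact hα2.trans (one_le_dist_pt (by nlinarith))
      · exact absurd rfl hxy
      · exact hα2.trans (one_le_dist_pt (by nlinarith))
      · exact hα2.trans (one_le_dist_pt (by nlinarith))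
      · exact hα2.trans (one_le_dist_pt (by nlinarith))
      · exact hα2.trans (one_le_dist_pt (by nlinarith))
      · exact hα2.trans (one_le_dist_pt (by nlinarith))
      · exact hα2.trans (one_le_dist_pt (by nlinarith))
      · exact hα2.trans (one_le_dist_pt (by nlinarith))
      · exact absurd rfl hxy
      · exact hα2.trans (one_le_dist_pt (by nlinarith))
      · exact hα2.trans (one_le_dist_pt (by nlinarith))
      · exact hα2.trans (one_le_dist_pt (by nlinarith))
      · exact hα2.trans (one_le_dist_pt (by nlinarith))
      · exact hα2.trans (one_le_dist_pt (by nlinarith))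
      · exact hα2.trans (one_le_dist_pt (by nlinarith))
      · exact hα2.trans (one_le_dist_pt (by nlinarith))
      · exact absurd rfl hxy
  have hcard : T.card = 7 := by
    rw [hT]
    rw [Finset.card_insert_of_notMem (by simp [n12, n13, n14, n15, n16, n17])]
    rw [Finset.card_insert_of_notMem (by simp [n23, n24, n25, n26, n27])]
    rw [Finset.card_insert_of_notMem (by simp [n34, n35, n36, n37])]
    rw [Finset.card_insert_of_notMem (by simp [n45, n46, n47])]
    rw [Finset.card_insert_of_notMem (by simp [n56, n57])]
    rw [Finset.card_insert_of_notMem (by simp [n67])]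
    simp
  omega

lemma convex_vor (S : Set E2) (x : E2) : Convex ℝ (vor S x) := by
  have hrw : vor S x = ⋂ z ∈ S, ⋂ (_ : z ≠ x), {y : E2 | dist y x ≤ dist y z} := by
    ext y; simp [vor]
  rw [hrw]
  refine convex_iInter fun z => convex_iInter fun _ => convex_iInter fun _ => ?_
  have hset : {y : E2 | dist y x ≤ dist y z}
      = {y : E2 | (2 : ℝ) * ((inner ℝ y z : ℝ) - (inner ℝ y x : ℝ)) ≤ ‖z‖ ^ 2 - ‖x‖ ^ 2} := by
    ext y
    simp only [Set.mem_setOf_eq]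
    constructor
    · intro h
      have h2 : dist y x ^ 2 ≤ dist y z ^ 2 := by
        exact pow_le_pow_left₀ dist_nonneg h 2
      rw [dist_eq_norm, dist_eq_norm, norm_sub_sq_real, norm_sub_sq_real] at h2
      linarith
    · intro h
      have h2 : dist y x ^ 2 ≤ dist y z ^ 2 := by
        rw [dist_eq_norm, dist_eq_norm, norm_sub_sq_real, norm_sub_sq_real]
        linarith
      exact le_of_pow_le_pow_left₀ two_ne_zero dist_nonneg h2
  rw [hset]
  apply convex_halfSpace_le
  constructor
  · intro p q; simp only [inner_add_left]; ring
  · intro c p; simp only [real_inner_smul_left, smul_eq_mul]; ring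

lemma convex_vtrunc (S : Set E2) (x : E2) : Convex ℝ (vtrunc S x) :=
  (convex_vor S x).inter (convex_closedBall x 1)

lemma self_mem_vtrunc (S : Set E2) (x : E2) : x ∈ vtrunc S x := by
  refine ⟨fun z _ _ => ?_, mem_closedBall_self (by norm_num)⟩
  simp only [dist_self]
  exact dist_nonneg

lemma mem_Omega (S : Finset E2) {w t : E2} (ht : t ∈ S) (hd : dist w t ≤ 1) :
    w ∈ ⋃ x ∈ (S : Set E2), vtrunc (S : Set E2) x := by
  obtain ⟨m, hm, hmin⟩ := S.exists_min_image (fun z => dist w z) ⟨t, ht⟩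
  refine Set.mem_biUnion (Finset.mem_coe.mpr hm) ⟨fun z hz _ => hmin z hz, ?_⟩
  exact mem_closedBall.mpr ((hmin t ht).trans hd)

lemma seg_dist {a b w : E2} (hw : w ∈ segment ℝ a b) (hab : dist a b ≤ 2) :
    dist w a ≤ 1 ∨ dist w b ≤ 1 := by
  obtain ⟨u, v, hu, hv, huv, rfl⟩ := hw
  have ea : u • a + v • b - a = v • (b - a) := by
    rw [smul_sub, show u = 1 - v by linarith, sub_smul, one_smul]; abel
  have eb : u • a + v • b - b = u • (a - b) := by
    rw [smul_sub, show v = 1 - u by linarith, sub_smul, one_smul]; abel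
  have da : dist (u • a + v • b) a = v * dist a b := by
    rw [dist_eq_norm, ea, norm_smul, Real.norm_of_nonneg hv, dist_eq_norm, norm_sub_rev]
  have db : dist (u • a + v • b) b = u * dist a b := by
    rw [dist_eq_norm, eb, norm_smul, Real.norm_of_nonneg hu, dist_eq_norm]
  have hd0 : (0 : ℝ) ≤ dist a b := dist_nonneg
  rcases le_or_gt v (1 / 2) with h | h
  · left; rw [da]; nlinarith
  · right; rw [db]
    have : u ≤ 1 / 2 := by linarith
    nlinarith

lemma chain_pre (c : ℕ → E2) (n : ℕ) :
    IsPreconnected ({c 0} ∪ ⋃ i ∈ Finset.range n, segment ℝ (c i) (c (i + 1))) ∧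
      c n ∈ ({c 0} ∪ ⋃ i ∈ Finset.range n, segment ℝ (c i) (c (i + 1))) := by
  induction n with
  | zero => simp [isPreconnected_singleton]
  | succ n ih =>
    have hset : ({c 0} ∪ ⋃ i ∈ Finset.range (n + 1), segment ℝ (c i) (c (i + 1)))
        = ({c 0} ∪ ⋃ i ∈ Finset.range n, segment ℝ (c i) (c (i + 1)))
          ∪ segment ℝ (c n) (c (n + 1)) := by
      rw [Finset.range_add_one, Finset.set_biUnion_insert]
      ext y
      simp only [Set.mem_union, Set.mem_singleton_iff]
      tauto
    rw [hset]
    refine ⟨IsPreconnected.union (c n) ih.2 (left_mem_segment ℝ _ _) ih.1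
      (convex_segment _ _).isPreconnected, Or.inr (right_mem_segment ℝ _ _)⟩

/-- for a connected configuration with pairwise distances `≥ α`, the union
`Ω` of the truncated Voronoi cells is a connected subset of the plane. -/
theorem omega_connected (α β : ℝ) (hα : α ∈ Set.Ioc (0 : ℝ) 1) (hβ : 1 ≤ β)
    (h3 : H3cond α β) (S : Finset E2) (hne : S.Nonempty)
    (hsep : ∀ x ∈ S, ∀ y ∈ S, x ≠ y → α ≤ dist x y)
    (hconn : ChainConnected β S) :
    IsConnected (⋃ x ∈ (S : Set E2), vtrunc (S : Set E2) x) := by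
  have hβ2 : β ≤ 2 := beta_le_two hα.1 hα.2 h3
  obtain ⟨x0, hx0⟩ := hne
  constructor
  · exact ⟨x0, Set.mem_biUnion (Finset.mem_coe.mpr hx0) (self_mem_vtrunc _ x0)⟩
  apply isPreconnected_of_forall_pair
  intro p hp q hq
  rw [Set.mem_iUnion₂] at hp hq
  obtain ⟨a, ha, hpa⟩ := hp
  obtain ⟨b, hb, hqb⟩ := hq
  obtain ⟨n, c, hc0, hcn, hmem, hd⟩ := hconn a (Finset.mem_coe.mp ha) b (Finset.mem_coe.mp hb)
  set A : Set E2 := {c 0} ∪ ⋃ i ∈ Finset.range n, segment ℝ (c i) (c (i + 1)) with hA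
  refine ⟨vtrunc (S : Set E2) a ∪ (A ∪ vtrunc (S : Set E2) b), ?_, Or.inl hpa,
    Or.inr (Or.inr hqb), ?_⟩
  · -- subset of Ω
    intro w hw
    rcases hw with hw | hw | hw
    · exact Set.mem_biUnion ha hw
    · rcases hw with hw | hw
      · rw [Set.mem_singleton_iff] at hw
        subst hw
        exact mem_Omega S (hc0 ▸ Finset.mem_coe.mp ha) (by simp [hc0])
      · rw [Set.mem_iUnion₂] at hw
        obtain ⟨i, hi, hseg⟩ := hw
        rw [Finset.mem_range] at hi
        have hdist : dist (c i) (c (i + 1)) ≤ 2 := by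
          rw [dist_comm]; exact (hd i hi).trans hβ2
        rcases seg_dist hseg hdist with h | h
        · exact mem_Omega S (hmem i hi.le) h
        · exact mem_Omega S (hmem (i + 1) hi) h
    · exact Set.mem_biUnion hb hw
  · -- preconnected
    have hpre : IsPreconnected A := (chain_pre c n).1
    have hbA : b ∈ A := hcn ▸ (chain_pre c n).2
    have haA : a ∈ A := hc0 ▸ Or.inl rfl
    have h1 : IsPreconnected (A ∪ vtrunc (S : Set E2) b) :=
      IsPreconnected.union b hbA (self_mem_vtrunc _ b) hpre
        (convex_vtrunc _ b).isPreconnected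
    exact IsPreconnected.union a (self_mem_vtrunc _ a) (Or.inl haA)
      (convex_vtrunc _ a).isPreconnected h1
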